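/- arXiv:1602.04279 — 4 statements merged into one kernel-verified Lean document; each statement's English description precedes it below -/
import Mathlib

section
/- Let μ > 0, α > 0 and let f solve f'' μ + f' + α f = 0 in the sense f'(t)=g(t), μ g'(t) = -α f(t) - g(t), with f(0)=0, g(0)=1. Then there exists a universal constant c > 0 (independent of μ, α, t) such that ∫₀ᵗ f(s)² ds ≤ c·μ²/α for all t ≥ 0. -/
/-- Uniform-in-`μ` bound on the mode kernels: there is a universal constant `c > 0`
(independent of `μ`, `α`, `t`) such that `∫₀ᵗ f(s)² ds ≤ c μ²/α` for the solution with
`f(0) = 0`, `g(0) = 1`. -/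
theorem stmt_3 :
    ∃ c > (0:ℝ), ∀ (μ α : ℝ), 0 < μ → 0 < α → ∀ f g : ℝ → ℝ,
      (∀ t, HasDerivAt f (g t) t) →
      (∀ t, HasDerivAt g ((-α * f t - g t) / μ) t) →
      f 0 = 0 → g 0 = 1 →
      ∀ t, 0 ≤ t → (∫ s in (0:ℝ)..t, f s ^ 2) ≤ c * μ ^ 2 / α := by
  refine ⟨1, one_pos, ?_⟩
  intro μ α hμ hα f g hf hg hf0 hg0 t ht
  have hμ' : (μ:ℝ) ≠ 0 := hμ.ne'
  have hfd : Differentiable ℝ f := fun x => (hf x).differentiableAt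
  have hgd : Differentiable ℝ g := fun x => (hg x).differentiableAt
  have hfc : Continuous f := hfd.continuous
  have hgc : Continuous g := hgd.continuous
  -- energy derivative
  have hE : ∀ s, HasDerivAt (fun u => α * f u ^ 2 + μ * g u ^ 2) (-2 * g s ^ 2) s := by
    intro s
    have h1 := (((hf s).pow 2).const_mul α).add (((hg s).pow 2).const_mul μ)
    refine HasDerivAt.congr_deriv h1 ?_
    field_simp
    ring
  have hH : ∀ s, HasDerivAt (fun u => μ * f u * g u + f u ^ 2 / 2)
      (μ * g s ^ 2 - α * f s ^ 2) s := by
    intro s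
    have h1 := (((hf s).const_mul μ).mul (hg s)).add (((hf s).pow 2).div_const 2)
    refine HasDerivAt.congr_deriv h1 ?_
    field_simp
    ring
  have hfint : IntervalIntegrable (fun s => f s ^ 2) MeasureTheory.volume 0 t :=
    (hfc.pow 2).intervalIntegrable _ _
  have hgint : IntervalIntegrable (fun s => g s ^ 2) MeasureTheory.volume 0 t :=
    (hgc.pow 2).intervalIntegrable _ _
  have hEeq : (∫ s in (0:ℝ)..t, -2 * g s ^ 2)
      = (α * f t ^ 2 + μ * g t ^ 2) - (α * f 0 ^ 2 + μ * g 0 ^ 2) :=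
    intervalIntegral.integral_eq_sub_of_hasDerivAt (fun s _ => hE s)
      ((continuous_const.mul (hgc.pow 2)).intervalIntegrable _ _)
  have hHeq : (∫ s in (0:ℝ)..t, (μ * g s ^ 2 - α * f s ^ 2))
      = (μ * f t * g t + f t ^ 2 / 2) - (μ * f 0 * g 0 + f 0 ^ 2 / 2) :=
    intervalIntegral.integral_eq_sub_of_hasDerivAt (fun s _ => hH s)
      (((continuous_const.mul (hgc.pow 2)).sub
        (continuous_const.mul (hfc.pow 2))).intervalIntegrable _ _)
  set If := ∫ s in (0:ℝ)..t, f s ^ 2 with hIf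
  set Ig := ∫ s in (0:ℝ)..t, g s ^ 2 with hIg
  have hE2 : -2 * Ig = (α * f t ^ 2 + μ * g t ^ 2) - μ := by
    rw [hIg, ← intervalIntegral.integral_const_mul, hEeq, hf0, hg0]; ring_nf
  have hH2 : μ * Ig - α * If = μ * f t * g t + f t ^ 2 / 2 := by
    have : (∫ s in (0:ℝ)..t, (μ * g s ^ 2 - α * f s ^ 2))
        = μ * Ig - α * If := by
      rw [intervalIntegral.integral_sub (hgint.const_mul μ) (hfint.const_mul α),
        intervalIntegral.integral_const_mul, intervalIntegral.integral_const_mul]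
    rw [← this, hHeq, hf0, hg0]; ring
  have hIgnn : 0 ≤ Ig := intervalIntegral.integral_nonneg ht (fun s _ => sq_nonneg _)
  have hEnn : 0 ≤ α * f t ^ 2 + μ * g t ^ 2 := by positivity
  -- E t ≤ μ hence g t ^ 2 ≤ 1
  have hgt1 : g t ^ 2 ≤ 1 := by nlinarith [sq_nonneg (f t)]
  rw [one_mul, le_div_iff₀ hα]
  nlinarith [sq_nonneg (f t + μ * g t), sq_nonneg (f t), sq_nonneg (g t)]
end

section
/- Let μ > 0, α > 0, θ ∈ [0,1], and let f solve f'(t)=g(t), μ g'(t) = -α f(t) - g(t) with f(0)=0, g(0)=1. Then there exists a constant c > 0 independent of μ, α, θ such that for all 0 ≤ s < t, ∫₀ˢ |f(t-r) - f(s-r)|² dr ≤ c·(μ²/α^{1-θ})·(t-s)^θ. -/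
open intervalIntegral MeasureTheory Set

/-- Derivative of the Lyapunov function `p = μ g + f`. -/
lemma stmt4_p_deriv (μ α : ℝ) (hμ0 : μ ≠ 0) (f g : ℝ → ℝ)
    (hf : ∀ t, HasDerivAt f (g t) t)
    (hg : ∀ t, HasDerivAt g ((-α * f t - g t) / μ) t) (u : ℝ) :
    HasDerivAt (fun v => μ * g v + f v) (-(α * f u)) u := by
  have h1 := ((hg u).const_mul μ).add (hf u)
  have h2 : μ * ((-α * f u - g u) / μ) + g u = -(α * f u) := by
    field_simp
    ring
  rwa [h2] at h1

/-- Derivative of `H = p² + μ α f²`. -/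
lemma stmt4_H_deriv (μ α : ℝ) (hμ0 : μ ≠ 0) (f g : ℝ → ℝ)
    (hf : ∀ t, HasDerivAt f (g t) t)
    (hg : ∀ t, HasDerivAt g ((-α * f t - g t) / μ) t) (u : ℝ) :
    HasDerivAt (fun v => (μ * g v + f v) ^ 2 + μ * α * (f v) ^ 2)
      (-(2 * α * (f u) ^ 2)) u := by
  have hp := (stmt4_p_deriv μ α hμ0 f g hf hg u).pow 2
  have hq := ((hf u).pow 2).const_mul (μ * α)
  have h := hp.add hq
  refine h.congr_deriv ?_
  push_cast
  ring

/-- Key Lyapunov lemma: `H` is antitone and controls `∫ f²`. -/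
lemma stmt4_key (μ α : ℝ) (hμ : 0 < μ) (hα : 0 < α) (f g : ℝ → ℝ)
    (hf : ∀ t, HasDerivAt f (g t) t)
    (hg : ∀ t, HasDerivAt g ((-α * f t - g t) / μ) t) :
    (∀ a b : ℝ, a ≤ b →
      (μ * g b + f b) ^ 2 + μ * α * (f b) ^ 2
        ≤ (μ * g a + f a) ^ 2 + μ * α * (f a) ^ 2) ∧
    (∀ a b : ℝ, a ≤ b →
      (∫ r in a..b, (f r) ^ 2)
        ≤ ((μ * g a + f a) ^ 2 + μ * α * (f a) ^ 2) / (2 * α)) := by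
  have hμ0 : μ ≠ 0 := hμ.ne'
  set H : ℝ → ℝ := fun v => (μ * g v + f v) ^ 2 + μ * α * (f v) ^ 2 with hHdef
  have hH : ∀ u, HasDerivAt H (-(2 * α * (f u) ^ 2)) u :=
    stmt4_H_deriv μ α hμ0 f g hf hg
  have hanti : Antitone H := by
    apply antitone_of_deriv_nonpos
    · exact fun u => (hH u).differentiableAt
    · intro u
      rw [(hH u).deriv]
      nlinarith [sq_nonneg (f u)]
  have hfd : Differentiable ℝ f := fun u => (hf u).differentiableAt
  have hfc : Continuous f := hfd.continuous
  refine ⟨fun a b hab => hanti hab, fun a b hab => ?_⟩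
  have hint : IntervalIntegrable (fun u => 2 * α * (f u) ^ 2) volume a b :=
    (Continuous.mul continuous_const ((hfc.pow 2))).intervalIntegrable a b
  have hftc : (∫ r in a..b, 2 * α * (f r) ^ 2) = (-H b) - (-H a) := by
    apply intervalIntegral.integral_eq_sub_of_hasDerivAt
    · intro x _
      have := (hH x).neg
      simp only [neg_neg] at this
      exact this
    · exact hint
  have hconst : (∫ r in a..b, 2 * α * (f r) ^ 2)
      = (2 * α) * ∫ r in a..b, (f r) ^ 2 := by
    simpa [mul_assoc] using
      intervalIntegral.integral_const_mul (2 * α) (fun r => (f r) ^ 2) (μ := volume) (a := a) (b := b)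
  have hHb : 0 ≤ H b := by positivity
  have h2α : (0:ℝ) < 2 * α := by linarith
  rw [hconst] at hftc
  have h1 : (2 * α) * (∫ r in a..b, (f r) ^ 2) ≤ H a := by
    rw [hftc]; linarith
  rw [le_div_iff₀ h2α]
  have h1' : (2 * α) * (∫ r in a..b, (f r) ^ 2)
      ≤ (μ * g a + f a) ^ 2 + μ * α * (f a) ^ 2 := h1
  linarith
/-- Classical energy `E = μ g² + α f²` is antitone. -/
lemma stmt4_E_anti (μ α : ℝ) (hμ : 0 < μ) (hα : 0 < α) (f g : ℝ → ℝ)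
    (hf : ∀ t, HasDerivAt f (g t) t)
    (hg : ∀ t, HasDerivAt g ((-α * f t - g t) / μ) t) :
    ∀ a b : ℝ, a ≤ b →
      μ * (g b) ^ 2 + α * (f b) ^ 2 ≤ μ * (g a) ^ 2 + α * (f a) ^ 2 := by
  have hμ0 : μ ≠ 0 := hμ.ne'
  have hE : ∀ u, HasDerivAt (fun v => μ * (g v) ^ 2 + α * (f v) ^ 2)
      (-(2 * (g u) ^ 2)) u := by
    intro u
    have h1 := (((hg u).pow 2).const_mul μ).add (((hf u).pow 2).const_mul α)
    refine h1.congr_deriv ?_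
    push_cast
    field_simp
    ring
  intro a b hab
  apply antitone_of_deriv_nonpos (fun u => (hE u).differentiableAt) _ hab
  intro u
  rw [(hE u).deriv]
  nlinarith [sq_nonneg (g u)]

set_option maxHeartbeats 2000000 in
/-- Uniform time-increment bound for the mode kernels: for every `θ ∈ [0,1]`,
`∫₀ˢ |f(t-r) - f(s-r)|² dr ≤ c · (μ²/α^{1-θ}) · (t-s)^θ` with a universal `c`. -/
theorem stmt_4 :
    ∃ c > (0:ℝ), ∀ (μ α θ : ℝ), 0 < μ → 0 < α → θ ∈ Set.Icc (0:ℝ) 1 →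
      ∀ f g : ℝ → ℝ,
      (∀ t, HasDerivAt f (g t) t) →
      (∀ t, HasDerivAt g ((-α * f t - g t) / μ) t) →
      f 0 = 0 → g 0 = 1 →
      ∀ s t : ℝ, 0 ≤ s → s < t →
        (∫ r in (0:ℝ)..s, (f (t - r) - f (s - r)) ^ 2)
          ≤ c * (μ ^ 2 / α ^ (1 - θ)) * (t - s) ^ θ := by
  refine ⟨4, by norm_num, ?_⟩
  intro μ α θ hμ hα hθ f g hf hg hf0 hg0 s t hs hst
  have hμ0 : μ ≠ 0 := hμ.ne'
  obtain ⟨hθ0, hθ1⟩ := hθ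
  set h := t - s with hhdef
  have hh0 : 0 < h := sub_pos.mpr hst
  clear_value h
  have hfd : Differentiable ℝ f := fun u => (hf u).differentiableAt
  have hfc : Continuous f := hfd.continuous
  have hgd : Differentiable ℝ g := fun u => (hg u).differentiableAt
  have hgc : Continuous g := hgd.continuous
  obtain ⟨hHanti, hHint⟩ := stmt4_key μ α hμ hα f g hf hg
  have hEanti := stmt4_E_anti μ α hμ hα f g hf hg
  have hH0 : (μ * g 0 + f 0) ^ 2 + μ * α * (f 0) ^ 2 = μ ^ 2 := by
    rw [hf0, hg0]; ring
  have hE0 : μ * (g 0) ^ 2 + α * (f 0) ^ 2 = μ := by rw [hf0, hg0]; ring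
  -- pointwise bounds for nonnegative times
  have hgb : ∀ u, 0 ≤ u → |g u| ≤ 1 := by
    intro u hu
    have h1 := hEanti 0 u hu
    rw [hE0] at h1
    have hsq : (g u) ^ 2 ≤ 1 ^ 2 := by nlinarith [sq_nonneg (f u)]
    have h2 := Real.sqrt_le_sqrt hsq
    rwa [Real.sqrt_sq_eq_abs, Real.sqrt_sq (by norm_num : (0:ℝ) ≤ 1)] at h2
  have hpb : ∀ u, 0 ≤ u → |μ * g u + f u| ≤ μ := by
    intro u hu
    have h1 := hHanti 0 u hu
    rw [hH0] at h1
    have hsq : (μ * g u + f u) ^ 2 ≤ μ ^ 2 := by nlinarith [sq_nonneg (f u), mul_pos hμ hα]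
    have h2 := Real.sqrt_le_sqrt hsq
    rwa [Real.sqrt_sq_eq_abs, Real.sqrt_sq hμ.le] at h2
  have hfb : ∀ u, 0 ≤ u → |f u| ≤ 2 * μ := by
    intro u hu
    have h1 := hpb u hu
    have h2 := hgb u hu
    rw [abs_le] at h1 h2 ⊢
    constructor <;> nlinarith [h1.1, h1.2, h2.1, h2.2]
  -- bounds at time h
  have hfh_FTC : f h = ∫ u in (0:ℝ)..h, g u := by
    rw [intervalIntegral.integral_eq_sub_of_hasDerivAt (fun x _ => hf x)
      (hgc.intervalIntegrable 0 h), hf0, sub_zero]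
  have hfh1 : |f h| ≤ h := by
    rw [hfh_FTC]
    have hb := intervalIntegral.norm_integral_le_of_norm_le_const
      (C := 1) (f := g) (a := 0) (b := h) ?_
    · simpa [abs_of_pos hh0] using hb
    · intro x hx
      rw [Set.uIoc_of_le hh0.le] at hx
      simpa using hgb x hx.1.le
  have hph : |(μ * g h + f h) - μ| ≤ 2 * μ * α * h := by
    have hptc : (∫ u in (0:ℝ)..h, -(α * f u))
        = (μ * g h + f h) - (μ * g 0 + f 0) := by
      exact intervalIntegral.integral_eq_sub_of_hasDerivAt
        (fun x _ => stmt4_p_deriv μ α hμ0 f g hf hg x)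
        ((continuous_const.mul hfc).neg.intervalIntegrable 0 h)
    have hp0 : μ * g 0 + f 0 = μ := by rw [hf0, hg0]; ring
    rw [hp0] at hptc
    rw [← hptc]
    have hb := intervalIntegral.norm_integral_le_of_norm_le_const
      (C := 2 * μ * α) (f := fun u => -(α * f u)) (a := 0) (b := h) ?_
    · rw [Real.norm_eq_abs, sub_zero, abs_of_pos hh0] at hb
      exact hb
    · intro x hx
      rw [Set.uIoc_of_le hh0.le] at hx
      have := hfb x hx.1.le
      rw [Real.norm_eq_abs, abs_neg, abs_mul, abs_of_pos hα]
      calc α * |f x| ≤ α * (2 * μ) := by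
            exact mul_le_mul_of_nonneg_left this hα.le
        _ = 2 * μ * α := by ring
  -- shifted solution
  set F : ℝ → ℝ := fun u => f (u + h) - f u with hFdef
  set G : ℝ → ℝ := fun u => g (u + h) - g u with hGdef
  have hshiftf : ∀ u : ℝ, HasDerivAt (fun v => f (v + h)) (g (u + h)) u := by
    intro u
    simpa [Function.comp_def] using HasDerivAt.comp u (hf (u + h)) ((hasDerivAt_id u).add_const h)
  have hshiftg : ∀ u : ℝ,
      HasDerivAt (fun v => g (v + h)) ((-α * f (u + h) - g (u + h)) / μ) u := by
    intro u
    simpa [Function.comp_def] using HasDerivAt.comp u (hg (u + h)) ((hasDerivAt_id u).add_const h)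
  have hF : ∀ u, HasDerivAt F (G u) u := fun u => (hshiftf u).sub (hf u)
  have hG : ∀ u, HasDerivAt G ((-α * F u - G u) / μ) u := by
    intro u
    have h1 := (hshiftg u).sub (hg u)
    refine h1.congr_deriv ?_
    simp only [hFdef, hGdef]
    field_simp
    ring
  obtain ⟨hFanti, hFint⟩ := stmt4_key μ α hμ hα F G hF hG
  have hFcont : Continuous F := by
    simp only [hFdef]
    exact (hfc.comp (continuous_id.add continuous_const)).sub hfc
  -- rewrite LHS
  have hLHS : (∫ r in (0:ℝ)..s, (f (t - r) - f (s - r)) ^ 2)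
      = ∫ r in (0:ℝ)..s, (F r) ^ 2 := by
    have e1 : (∫ r in (0:ℝ)..s, (f (t - r) - f (s - r)) ^ 2)
        = ∫ r in (0:ℝ)..s, (fun x => (F x) ^ 2) (s - r) := by
      apply intervalIntegral.integral_congr
      intro r _
      show (f (t - r) - f (s - r)) ^ 2 = (F (s - r)) ^ 2
      have e2 : s - r + h = t - r := by rw [hhdef]; ring
      simp only [hFdef]
      rw [e2]
    rw [e1, intervalIntegral.integral_comp_sub_left (fun x => (F x) ^ 2) s]
    norm_num
  -- bound 1 (small increments)
  have hF0 : F 0 = f h := by simp [hFdef, hf0]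
  have hFG0 : μ * G 0 + F 0 = (μ * g h + f h) - μ := by
    simp only [hFdef, hGdef, hf0, hg0, zero_add]
    ring
  have hfh2 : (f h) ^ 2 ≤ 2 * μ * h := by
    have e : (f h) ^ 2 = |f h| * |f h| := by rw [← sq_abs]; ring
    rw [e]
    calc |f h| * |f h| ≤ h * (2 * μ) :=
          mul_le_mul hfh1 (hfb h hh0.le) (abs_nonneg _) hh0.le
      _ = 2 * μ * h := by ring
  have hbound1 : (∫ r in (0:ℝ)..s, (F r) ^ 2)
      ≤ 2 * μ ^ 2 * α * h ^ 2 + μ * (f h) ^ 2 / 2 := by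
    calc (∫ r in (0:ℝ)..s, (F r) ^ 2)
        ≤ ((μ * G 0 + F 0) ^ 2 + μ * α * (F 0) ^ 2) / (2 * α) := hFint 0 s hs
      _ ≤ ((2 * μ * α * h) ^ 2 + μ * α * (f h) ^ 2) / (2 * α) := by
          rw [hFG0, hF0]
          have ⟨l, r⟩ := abs_le.mp hph
          have hsq : ((μ * g h + f h) - μ) ^ 2 ≤ (2 * μ * α * h) ^ 2 :=
            sq_le_sq' (by linarith) r
          gcongr
      _ = 2 * μ ^ 2 * α * h ^ 2 + μ * (f h) ^ 2 / 2 := by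
          field_simp
  -- bound 2 (large increments)
  have hintb : ∀ a b : ℝ, 0 ≤ a → a ≤ b →
      (∫ r in a..b, (f r) ^ 2) ≤ μ ^ 2 / (2 * α) := by
    intro a b ha hab
    calc (∫ r in a..b, (f r) ^ 2)
        ≤ ((μ * g a + f a) ^ 2 + μ * α * (f a) ^ 2) / (2 * α) := hHint a b hab
      _ ≤ μ ^ 2 / (2 * α) := by
          have h1 := hHanti 0 a ha
          rw [hH0] at h1
          gcongr
  have hbound2 : (∫ r in (0:ℝ)..s, (F r) ^ 2) ≤ 2 * μ ^ 2 / α := by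
    have hint1 : IntervalIntegrable (fun r => (F r) ^ 2) volume 0 s :=
      (hFcont.pow 2).intervalIntegrable 0 s
    have hcsh : Continuous fun r : ℝ => f (r + h) :=
      hfc.comp (continuous_id.add continuous_const)
    have hcont2 : Continuous fun r : ℝ => 2 * (f (r + h)) ^ 2 + 2 * (f r) ^ 2 :=
      (continuous_const.mul (hcsh.pow 2)).add (continuous_const.mul (hfc.pow 2))
    have hint2 : IntervalIntegrable
        (fun r => 2 * (f (r + h)) ^ 2 + 2 * (f r) ^ 2) volume 0 s :=
      hcont2.intervalIntegrable 0 s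
    have hmono : (∫ r in (0:ℝ)..s, (F r) ^ 2)
        ≤ ∫ r in (0:ℝ)..s, (2 * (f (r + h)) ^ 2 + 2 * (f r) ^ 2) := by
      apply intervalIntegral.integral_mono_on hs hint1 hint2
      intro x _
      simp only [hFdef]
      nlinarith [sq_nonneg (f (x + h) + f x)]
    have hsplit : (∫ r in (0:ℝ)..s, (2 * (f (r + h)) ^ 2 + 2 * (f r) ^ 2))
        = 2 * (∫ r in (0:ℝ)..s, (f (r + h)) ^ 2)
          + 2 * (∫ r in (0:ℝ)..s, (f r) ^ 2) := by
      have i1 : IntervalIntegrable (fun r => 2 * (f (r + h)) ^ 2) volume 0 s :=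
        (continuous_const.mul (hcsh.pow 2)).intervalIntegrable 0 s
      have i2 : IntervalIntegrable (fun r => 2 * (f r) ^ 2) volume 0 s :=
        (continuous_const.mul (hfc.pow 2)).intervalIntegrable 0 s
      rw [intervalIntegral.integral_add i1 i2,
        intervalIntegral.integral_const_mul, intervalIntegral.integral_const_mul]
    have hshift : (∫ r in (0:ℝ)..s, (f (r + h)) ^ 2)
        = ∫ r in h..(s + h), (f r) ^ 2 := by
      simpa using intervalIntegral.integral_comp_add_right (fun x => (f x) ^ 2) h
        (a := 0) (b := s)
    have b1 : (∫ r in h..(s + h), (f r) ^ 2) ≤ μ ^ 2 / (2 * α) :=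
      hintb h (s + h) hh0.le (by linarith)
    have b2 : (∫ r in (0:ℝ)..s, (f r) ^ 2) ≤ μ ^ 2 / (2 * α) := hintb 0 s le_rfl hs
    calc (∫ r in (0:ℝ)..s, (F r) ^ 2)
        ≤ 2 * (∫ r in (0:ℝ)..s, (f (r + h)) ^ 2)
          + 2 * (∫ r in (0:ℝ)..s, (f r) ^ 2) := by rw [← hsplit]; exact hmono
      _ ≤ 2 * (μ ^ 2 / (2 * α)) + 2 * (μ ^ 2 / (2 * α)) := by
          rw [hshift]; gcongr
      _ = 2 * μ ^ 2 / α := by field_simp; ring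
  -- combine via min
  have hmain : (∫ r in (0:ℝ)..s, (F r) ^ 2) ≤ 3 * μ ^ 2 * min h α⁻¹ := by
    rcases le_total (α * h) 1 with hc | hc
    · have hhle : h ≤ α⁻¹ := by rw [inv_eq_one_div, le_div_iff₀ hα]; linarith
      rw [min_eq_left hhle]
      calc (∫ r in (0:ℝ)..s, (F r) ^ 2)
          ≤ 2 * μ ^ 2 * α * h ^ 2 + μ * (f h) ^ 2 / 2 := hbound1
        _ ≤ 3 * μ ^ 2 * h := by
            have k1 : 0 ≤ μ ^ 2 * h * (1 - α * h) :=
              mul_nonneg (mul_nonneg (sq_nonneg μ) hh0.le) (sub_nonneg.mpr hc)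
            have k2 : 0 ≤ μ * (2 * μ * h - (f h) ^ 2) :=
              mul_nonneg hμ.le (sub_nonneg.mpr hfh2)
            nlinarith [k1, k2]
    · have hhle : α⁻¹ ≤ h := by
        rw [inv_eq_one_div, div_le_iff₀ hα]; linarith
      rw [min_eq_right hhle]
      calc (∫ r in (0:ℝ)..s, (F r) ^ 2) ≤ 2 * μ ^ 2 / α := hbound2
        _ ≤ 3 * μ ^ 2 * α⁻¹ := by
            rw [div_eq_mul_inv]
            have : 0 ≤ μ ^ 2 * α⁻¹ := by positivity
            nlinarith
  -- rpow interpolation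
  have hmin_pos : 0 < min h α⁻¹ := lt_min hh0 (inv_pos.mpr hα)
  have hinterp : min h α⁻¹ ≤ h ^ θ * α⁻¹ ^ (1 - θ) := by
    have e1 : min h α⁻¹ = (min h α⁻¹) ^ θ * (min h α⁻¹) ^ (1 - θ) := by
      rw [← Real.rpow_add hmin_pos]
      norm_num
    rw [e1]
    have t1 : (min h α⁻¹) ^ θ ≤ h ^ θ :=
      Real.rpow_le_rpow hmin_pos.le (min_le_left _ _) hθ0
    have t2 : (min h α⁻¹) ^ (1 - θ) ≤ α⁻¹ ^ (1 - θ) :=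
      Real.rpow_le_rpow hmin_pos.le (min_le_right _ _) (by linarith)
    exact mul_le_mul t1 t2 (Real.rpow_nonneg hmin_pos.le _)
      (Real.rpow_nonneg hh0.le _)
  rw [hLHS]
  calc (∫ r in (0:ℝ)..s, (F r) ^ 2) ≤ 3 * μ ^ 2 * min h α⁻¹ := hmain
    _ ≤ 3 * μ ^ 2 * (h ^ θ * α⁻¹ ^ (1 - θ)) := by
        exact mul_le_mul_of_nonneg_left hinterp (by positivity)
    _ ≤ 4 * (μ ^ 2 / α ^ (1 - θ)) * h ^ θ := by
        rw [Real.inv_rpow hα.le, div_eq_mul_inv]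
        nlinarith [mul_nonneg (mul_nonneg (sq_nonneg μ)
          (Real.rpow_nonneg hh0.le θ))
          (inv_nonneg.mpr (Real.rpow_nonneg hα.le (1 - θ)))]
end

section
/- Let H be a separable Hilbert space with orthonormal basis (e_k) and A e_k = -α_k e_k, 0 < α_1 ≤ α_k ↑. For ε > 0 define A_ε = J_ε^{-1} ⊗ A on H ⊕ H (i.e., acting as the 2×2 matrix J_ε^{-1} = (1/(1+ε²))·[[ε, -1],[1, ε]] composed with the Laplacian in each mode). Then the semigroup T_ε(t) generated by A_ε satisfies ‖T_ε(t)‖ ≤ exp(-ε·α_1·t/(1+ε²)) for all t ≥ 0. -/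
open Matrix

attribute [local instance] Matrix.linftyOpNormedAddCommGroup Matrix.linftyOpNormedRing
  Matrix.linftyOpNormedSpace Matrix.linftyOpNormedAlgebra

set_option maxHeartbeats 1000000 in
/-- Decay of the semigroup `T_ε(t)` generated by `A_ε = J_ε⁻¹ A`: on the `k`-th eigenmode
(a two-dimensional fiber where `T_ε(t)` acts as `exp(t·(-α_k)·J_ε⁻¹)`), the Euclidean norm
satisfies `‖T_ε(t)x‖ ≤ exp(-ε α_1 t/(1+ε²))·‖x‖`; hence `‖T_ε(t)‖ ≤ exp(-ε α_1 t/(1+ε²))`. -/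
theorem stmt_10 (ε : ℝ) (hε : 0 < ε) (α : ℕ → ℝ) (hα : 0 < α 0) (hmono : Monotone α) :
    ∀ (k : ℕ) (t : ℝ), 0 ≤ t → ∀ x : Fin 2 → ℝ,
      (((NormedSpace.exp
          (t • ((-(α k)) • (!![ε, 1; -1, ε] : Matrix (Fin 2) (Fin 2) ℝ)⁻¹))).mulVec x 0) ^ 2
        + ((NormedSpace.exp
          (t • ((-(α k)) • (!![ε, 1; -1, ε] : Matrix (Fin 2) (Fin 2) ℝ)⁻¹))).mulVec x 1) ^ 2)
      ≤ (Real.exp (-(ε * α 0 * t) / (1 + ε ^ 2))) ^ 2 * ((x 0) ^ 2 + (x 1) ^ 2) := by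
  intro k t ht x
  have hd : (0:ℝ) < 1 + ε ^ 2 := by positivity
  set J : Matrix (Fin 2) (Fin 2) ℝ := !![0, -1; 1, 0] with hJdef
  have hJ : J * J = -1 := by
    ext i j
    fin_cases i <;> fin_cases j <;>
      simp [hJdef, Matrix.mul_apply, Fin.sum_univ_two]
  -- inverse formula
  have hinv : (!![ε, 1; -1, ε] : Matrix (Fin 2) (Fin 2) ℝ)⁻¹
      = (1 / (1 + ε ^ 2)) • !![ε, -1; 1, ε] := by
    apply Matrix.inv_eq_right_inv
    ext i j
    fin_cases i <;> fin_cases j <;>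
      simp [Matrix.mul_apply, Fin.sum_univ_two, Matrix.one_fin_two] <;>
      field_simp <;> ring
  set φ : ℂ →ₐ[ℝ] Matrix (Fin 2) (Fin 2) ℝ := Complex.liftAux J hJ with hφdef
  have hφc : Continuous φ := φ.toLinearMap.continuous_of_finiteDimensional
  have hφz : ∀ z : ℂ, φ z = !![z.re, -z.im; z.im, z.re] := by
    intro z
    rw [hφdef, Complex.liftAux_apply, Algebra.algebraMap_eq_smul_one]
    ext i j
    fin_cases i <;> fin_cases j <;> simp [hJdef, Matrix.one_fin_two]
  set c : ℝ := -(α k) * t / (1 + ε ^ 2) with hc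
  have hM : t • ((-(α k)) • (!![ε, 1; -1, ε] : Matrix (Fin 2) (Fin 2) ℝ)⁻¹)
      = φ (Complex.mk (c * ε) c) := by
    rw [hinv, hφz]
    ext i j
    fin_cases i <;> fin_cases j <;>
      simp [hc] <;> field_simp <;> (first | ring1 | (left; first | ring1 | trivial))
  rw [hM, show NormedSpace.exp (φ (Complex.mk (c * ε) c)) = φ (NormedSpace.exp (Complex.mk (c * ε) c)) from
    (NormedSpace.map_exp φ hφc _).symm,
    ← Complex.exp_eq_exp_ℂ]
  set w : ℂ := Complex.exp (Complex.mk (c * ε) c) with hw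
  rw [hφz w]
  have h0 : (!![w.re, -w.im; w.im, w.re]).mulVec x 0 = w.re * x 0 - w.im * x 1 := by
    simp [Matrix.mulVec, dotProduct, Fin.sum_univ_two]; ring
  have h1 : (!![w.re, -w.im; w.im, w.re]).mulVec x 1 = w.im * x 0 + w.re * x 1 := by
    simp [Matrix.mulVec, dotProduct, Fin.sum_univ_two]
  rw [h0, h1]
  have habs : w.re ^ 2 + w.im ^ 2 = (Real.exp (c * ε)) ^ 2 := by
    have hre : w.re = Real.exp (c * ε) * Real.cos c := by
      rw [hw]; exact Complex.exp_re _
    have him : w.im = Real.exp (c * ε) * Real.sin c := by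
      rw [hw]; exact Complex.exp_im _
    rw [hre, him]
    have := Real.sin_sq_add_cos_sq c
    nlinarith [this]
  have key : (w.re * x 0 - w.im * x 1) ^ 2 + (w.im * x 0 + w.re * x 1) ^ 2
      = (Real.exp (c * ε)) ^ 2 * (x 0 ^ 2 + x 1 ^ 2) := by
    rw [← habs]; ring
  rw [key]
  have hle : c * ε ≤ -(ε * α 0 * t) / (1 + ε ^ 2) := by
    rw [hc, div_mul_eq_mul_div, div_le_div_iff_of_pos_right hd]
    have : α 0 * t ≤ α k * t := mul_le_mul_of_nonneg_right (hmono (Nat.zero_le k)) ht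
    nlinarith
  have : (Real.exp (c * ε)) ^ 2 ≤ (Real.exp (-(ε * α 0 * t) / (1 + ε ^ 2))) ^ 2 := by
    have := Real.exp_le_exp.mpr hle
    nlinarith [Real.exp_pos (c * ε)]
  nlinarith [sq_nonneg (x 0), sq_nonneg (x 1), Real.exp_pos (c*ε)]
end

section
/- Let H be a Hilbert space, Q : H → H injective self-adjoint nonnegative, A self-adjoint negative with A e_k = -α_k e_k, and F : H → ℝ Fréchet differentiable with Lipschitz derivative, F(0)=0, F ≥ 0. For φ : (-∞,0] → H absolutely continuous with φ(0) = u ∈ Dom((-A)^{1/2}Q^{-1}), dφ/dt(0) = v ∈ Dom(Q^{-1}), and with |(-A)^{1/2}Q^{-1}φ(t)| + |Q^{-1}dφ/dt(t)| → 0 as t → -∞, one has the identity 2∫_{-∞}^0 ⟨Q^{-1}dφ/dt(t), Q^{-1}(μ d²φ/dt²(t) - Aφ(t)) + Q DF(φ(t))⟩ dt = |(-A)^{1/2}Q^{-1}u|² + 2F(u) + μ|Q^{-1}v|². -/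
open scoped RealInnerProductSpace
open MeasureTheory

/-- Completion-of-the-square identity for the quasi-potential of the gradient damped wave
equation.  Here `Qinv`, `R = (-A)^{1/2}Q⁻¹`, `A'`, `Q` are the relevant operators (with
their structural relations encoded in `hQA`, `hQ`, `hcoer`), `DF` is the Fréchet gradient
of `F`, and `φ` is a trajectory with `φ(0) = u`, `φ'(0) = v` and
`|Rφ(t)| + |Q⁻¹φ'(t)| → 0` as `t → -∞`.  Then
`2∫_{-∞}^0 ⟨Q⁻¹φ', Q⁻¹(μφ'' - Aφ) + Q DF(φ)⟩ dt = |(-A)^{1/2}Q⁻¹u|² + 2F(u) + μ|Q⁻¹v|²`. -/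
theorem stmt_13 {H : Type*} [NormedAddCommGroup H] [InnerProductSpace ℝ H] [CompleteSpace H]
    (μ : ℝ) (hμ : 0 < μ)
    (Qinv R A' Q : H →L[ℝ] H)
    (hQA : ∀ x y : H, ⟪Qinv x, Qinv (A' y)⟫ = -⟪R x, R y⟫)
    (hQ : ∀ x y : H, ⟪Qinv x, Q y⟫ = ⟪x, y⟫)
    (C : ℝ) (hC : 0 < C) (hcoer : ∀ x : H, ‖x‖ ≤ C * ‖R x‖)
    (F : H → ℝ) (DF : H → H) (hF : ∀ x, HasGradientAt F (DF x) x)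
    (L : NNReal) (hL : LipschitzWith L DF) (hF0 : F 0 = 0) (hFpos : ∀ x, 0 ≤ F x)
    (u v : H) (φ dφ ddφ : ℝ → H)
    (hφ : ∀ t, HasDerivAt φ (dφ t) t) (hdφ : ∀ t, HasDerivAt dφ (ddφ t) t)
    (hu : φ 0 = u) (hv : dφ 0 = v)
    (hdecay : Filter.Tendsto (fun t => ‖R (φ t)‖ + ‖Qinv (dφ t)‖) Filter.atBot (nhds 0))
    (hint : IntegrableOn
      (fun t => ⟪Qinv (dφ t), Qinv (μ • ddφ t - A' (φ t)) + Q (DF (φ t))⟫) (Set.Iic 0)) :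
    2 * ∫ t in Set.Iic (0:ℝ), ⟪Qinv (dφ t), Qinv (μ • ddφ t - A' (φ t)) + Q (DF (φ t))⟫
      = ‖R u‖ ^ 2 + 2 * F u + μ * ‖Qinv v‖ ^ 2 := by
  set g : ℝ → ℝ := fun t => ‖R (φ t)‖ ^ 2 + 2 * F (φ t) + μ * ‖Qinv (dφ t)‖ ^ 2 with hg
  have hgderiv : ∀ t : ℝ, HasDerivAt g
      (2 * ⟪Qinv (dφ t), Qinv (μ • ddφ t - A' (φ t)) + Q (DF (φ t))⟫) t := by
    intro t
    have h1 : HasDerivAt (fun s => R (φ s)) (R (dφ t)) t := (R.hasFDerivAt.comp_hasDerivAt t (hφ t))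
    have h2 : HasDerivAt (fun s => Qinv (dφ s)) (Qinv (ddφ t)) t :=
      (Qinv.hasFDerivAt.comp_hasDerivAt t (hdφ t))
    have hn1 : HasDerivAt (fun s => ‖R (φ s)‖ ^ 2) (2 * ⟪R (dφ t), R (φ t)⟫) t := by
      have := (h1.inner ℝ h1)
      simp only [real_inner_comm] at this ⊢
      exact h1.norm_sq
    have hn2 : HasDerivAt (fun s => ‖Qinv (dφ s)‖ ^ 2) (2 * ⟪Qinv (dφ t), Qinv (ddφ t)⟫) t := by
      have := (h2.inner ℝ h2)
      simp only [real_inner_comm] at this ⊢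
      exact h2.norm_sq
    have hFc : HasDerivAt (fun s => F (φ s)) (⟪DF (φ t), dφ t⟫) t := by
      have := (hF (φ t)).hasFDerivAt.comp_hasDerivAt t (hφ t)
      simp at this
      exact this
    have := (hn1.add (hFc.const_mul 2)).add (hn2.const_mul μ)
    refine this.congr_deriv ?_
    have e1 : ⟪Qinv (dφ t), Qinv (μ • ddφ t - A' (φ t))⟫
        = μ * ⟪Qinv (dφ t), Qinv (ddφ t)⟫ + ⟪R (dφ t), R (φ t)⟫ := by
      rw [map_sub, _root_.map_smul, inner_sub_right, inner_smul_right, hQA]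
      ring
    rw [inner_add_right, e1, hQ]
    rw [real_inner_comm (dφ t) (DF (φ t))]
    ring
  have hint2 : IntegrableOn
      (fun t => 2 * ⟪Qinv (dφ t), Qinv (μ • ddφ t - A' (φ t)) + Q (DF (φ t))⟫) (Set.Iic 0) :=
    hint.const_mul 2
  -- limits
  have hR0 : Filter.Tendsto (fun t => ‖R (φ t)‖) Filter.atBot (nhds 0) := by
    refine squeeze_zero (fun t => norm_nonneg _) (fun t => ?_) hdecay
    exact le_add_of_nonneg_right (norm_nonneg _)
  have hQ0 : Filter.Tendsto (fun t => ‖Qinv (dφ t)‖) Filter.atBot (nhds 0) := by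
    refine squeeze_zero (fun t => norm_nonneg _) (fun t => ?_) hdecay
    exact le_add_of_nonneg_left (norm_nonneg _)
  have hφ0 : Filter.Tendsto (fun t => φ t) Filter.atBot (nhds 0) := by
    rw [tendsto_zero_iff_norm_tendsto_zero]
    refine squeeze_zero (fun t => norm_nonneg _) (fun t => hcoer (φ t)) ?_
    simpa using hR0.const_mul C
  have hF0' : Filter.Tendsto (fun t => F (φ t)) Filter.atBot (nhds 0) := by
    have hcont : ContinuousAt F 0 := (hF 0).hasFDerivAt.differentiableAt.continuousAt
    have := hcont.tendsto.comp hφ0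
    simp [hF0] at this
    exact this
  have hglim : Filter.Tendsto g Filter.atBot (nhds 0) := by
    have : Filter.Tendsto g Filter.atBot (nhds ((0:ℝ)^2 + 2*0 + μ * (0:ℝ)^2)) :=
      ((((hR0.pow 2)).add (hF0'.const_mul 2)).add ((hQ0.pow 2).const_mul μ))
    simpa using this
  have key := integral_Iic_of_hasDerivAt_of_tendsto' (a := 0) (f := g)
    (fun x _ => hgderiv x) hint2 hglim
  rw [integral_const_mul] at key
  rw [key]
  simp [hg, hu, hv]
end
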